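/- Assume √ε_i ≤ √ε_j/2 and √ε_j ≤ √α/4. Then there exists a unique point x_{i,j} ∈ (0,1] with B^l_i(x_{i,j})/√ε_i = B^l_j(x_{i,j})/√ε_j; it is given explicitly by x_{i,j} = ln(√ε_j/√ε_i) / (√α·(1/√ε_i − 1/√ε_j)); it satisfies x_{i,j} ≤ 1/2; and moreover B^l_i(x)/√ε_i > B^l_j(x)/√ε_j for all x ∈ [0, x_{i,j}), while B^l_i(x)/√ε_i < B^l_j(x)/√ε_j for all x ∈ (x_{i,j}, 1]. -/

import Mathlib

noncomputable def Bl (α e x : ℝ) : ℝ := Real.exp (-x * Real.sqrt (α / e))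

noncomputable def xpt (α ei ej : ℝ) : ℝ :=
  Real.log (Real.sqrt ej / Real.sqrt ei) / (Real.sqrt α * (1 / Real.sqrt ei - 1 / Real.sqrt ej))

theorem stmt6
    (α ei ej : ℝ) (hα : 0 < α) (hi : 0 < ei) (hij : ei < ej)
    (hhalf : Real.sqrt ei ≤ Real.sqrt ej / 2)
    (hsmall : Real.sqrt ej ≤ Real.sqrt α / 4) :
    xpt α ei ej ∈ Set.Ioc (0:ℝ) 1 ∧
    (∀ x ∈ Set.Ioc (0:ℝ) 1,
      (Bl α ei x / Real.sqrt ei = Bl α ej x / Real.sqrt ej ↔ x = xpt α ei ej)) ∧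
    xpt α ei ej ≤ 1 / 2 ∧
    (∀ x ∈ Set.Ico (0:ℝ) (xpt α ei ej), Bl α ej x / Real.sqrt ej < Bl α ei x / Real.sqrt ei) ∧
    (∀ x ∈ Set.Ioc (xpt α ei ej) 1, Bl α ei x / Real.sqrt ei < Bl α ej x / Real.sqrt ej) := by
  set a := Real.sqrt ei with ha'
  set b := Real.sqrt ej with hb'
  set s := Real.sqrt α with hs'
  have ha : 0 < a := Real.sqrt_pos.2 hi
  have hb : 0 < b := Real.sqrt_pos.2 (hi.trans hij)
  have hs : 0 < s := Real.sqrt_pos.2 hα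
  have hab : a < b := Real.sqrt_lt_sqrt hi.le hij
  have hDi : Real.sqrt (α / ei) = s / a := Real.sqrt_div hα.le ei
  have hDj : Real.sqrt (α / ej) = s / b := Real.sqrt_div hα.le ej
  set C := Real.log (b / a) with hC'
  set D := s * (1 / a - 1 / b) with hD'
  have hC : 0 < C := Real.log_pos (by rw [lt_div_iff₀ ha]; linarith)
  have hDpos : 0 < D := by
    apply mul_pos hs
    have : 1 / b < 1 / a := one_div_lt_one_div_of_lt ha hab
    linarith
  have hxpt : xpt α ei ej = C / D := rfl
  have hx0 : 0 < xpt α ei ej := by rw [hxpt]; positivity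
  have hBi : ∀ x : ℝ, Bl α ei x / a = Real.exp (-x * (s / a) - Real.log a) := by
    intro x
    rw [Bl, hDi, Real.exp_sub, Real.exp_log ha]
  have hBj : ∀ x : ℝ, Bl α ej x / b = Real.exp (-x * (s / b) - Real.log b) := by
    intro x
    rw [Bl, hDj, Real.exp_sub, Real.exp_log hb]
  have hdiff : ∀ x : ℝ,
      (-x * (s / a) - Real.log a) - (-x * (s / b) - Real.log b) = C - x * D := by
    intro x
    rw [hC', Real.log_div hb.ne' ha.ne', hD']
    field_simp
    ring
  -- bound: xpt ≤ 1/2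
  have hlog : C ≤ b / a - 1 := Real.log_le_sub_one_of_pos (by positivity)
  have heq2 : (b / a - 1) / D = b / s := by
    rw [div_eq_div_iff hDpos.ne' hs.ne', hD']
    field_simp
  have hhalfbound : xpt α ei ej ≤ 1 / 2 := by
    rw [hxpt]
    have h1 : C / D ≤ (b / a - 1) / D := by gcongr
    rw [heq2] at h1
    have h2 : b / s ≤ 1 / 2 := by
      rw [div_le_iff₀ hs]; linarith
    linarith
  have hx1 : xpt α ei ej ≤ 1 := by linarith
  refine ⟨⟨hx0, hx1⟩, ?_, hhalfbound, ?_, ?_⟩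
  · intro x _
    rw [hBi, hBj, Real.exp_eq_exp, hxpt]
    constructor
    · intro h
      have : C - x * D = 0 := by rw [← hdiff x]; linarith
      rw [eq_div_iff hDpos.ne']
      linarith
    · intro h
      rw [h] at *
      have : C - (C / D) * D = 0 := by field_simp; ring
      have := hdiff (C / D)
      linarith
  · intro x hx
    rw [hBi, hBj, Real.exp_lt_exp]
    have hxlt : x < C / D := by rw [hxpt] at hx; exact hx.2
    have : x * D < C := by
      rw [← lt_div_iff₀ hDpos]; exact hxlt
    have := hdiff x
    linarith
  · intro x hx
    rw [hBi, hBj, Real.exp_lt_exp]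
    have hxgt : C / D < x := by rw [hxpt] at hx; exact hx.1
    have : C < x * D := by
      rw [← div_lt_iff₀ hDpos]; exact hxgt
    have := hdiff x
    linarith
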